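/- Let σ : (Ω, m) → (Ω, m) be an invertible ergodic measure-preserving transformation of a probability space, and let c, d : Ω → (0, ∞) be measurable with log c and log d integrable and ∫ log c dm < log γ̃ < log γ < 0 for some constants γ̃, γ ∈ (0,1). Then the function a : Ω → [0, ∞] defined by a(ω) = Σ_{j=0}^∞ γ^{-j-1} d(σ^{-j-1}ω) ∏_{k=1}^{j} c(σ^{-k}ω) (with the empty product equal to 1) is m-almost surely finite, and satisfies the twisted cohomological equation γ·a(σω) = c(ω)·a(ω) + d(ω) for m-a.e. ω. -/

import Mathlib

set_option linter.unusedSectionVars false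
set_option linter.unusedVariables false
open MeasureTheory Filter
open scoped ENNReal

section aux
variable {Ω : Type*} [MeasurableSpace Ω]

/-- Garsia's maximal function `max (0, S₁g, …, Sₙg)`. -/
noncomputable def stmt10M (g : Ω → ℝ) (τ : Ω → Ω) : ℕ → Ω → ℝ
  | 0 => fun _ => 0
  | (n+1) => fun ω => max 0 (g ω + stmt10M g τ n (τ ω))

lemma stmt10M_nonneg (g : Ω → ℝ) (τ : Ω → Ω) : ∀ n ω, 0 ≤ stmt10M g τ n ω
  | 0, _ => le_refl 0
  | (n+1), _ => le_max_left _ _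

lemma stmt10M_mono (g : Ω → ℝ) (τ : Ω → Ω) : ∀ n ω, stmt10M g τ n ω ≤ stmt10M g τ (n+1) ω
  | 0, ω => stmt10M_nonneg g τ 1 ω
  | (n+1), ω => by
      have h := stmt10M_mono g τ n (τ ω)
      show max 0 (g ω + stmt10M g τ n (τ ω)) ≤ max 0 (g ω + stmt10M g τ (n+1) (τ ω))
      exact max_le_max (le_refl 0) (by linarith)

lemma stmt10M_meas {g : Ω → ℝ} {τ : Ω → Ω} (hg : Measurable g) (hτ : Measurable τ) :
    ∀ n, Measurable (stmt10M g τ n)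
  | 0 => measurable_const
  | (n+1) => measurable_const.max (hg.add ((stmt10M_meas hg hτ n).comp hτ))

lemma stmt10M_int {m : Measure Ω} {g : Ω → ℝ} {τ : Ω → Ω} (hg : Measurable g)
    (hgi : Integrable g m) (hτ : MeasurePreserving τ m m) :
    ∀ n, Integrable (stmt10M g τ n) m
  | 0 => (integrable_zero _ _ _).congr (by simp [stmt10M]; exact Filter.EventuallyEq.rfl)
  | (n+1) => by
      have h1 : Integrable (fun ω => stmt10M g τ n (τ ω)) m :=
        (hτ.integrable_comp (stmt10M_meas hg hτ.measurable n).aestronglyMeasurable).mpr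
          (stmt10M_int hg hgi hτ n)
      have h2 := (hgi.add h1).pos_part
      have : stmt10M g τ (n+1) = fun ω => max (g ω + stmt10M g τ n (τ ω)) 0 :=
        funext fun ω => max_comm _ _
      rw [this]; exact h2

lemma stmt10S_succ (g : Ω → ℝ) (τ : Ω → Ω) (n : ℕ) (ω : Ω) :
    ∑ k ∈ Finset.range (n+1), g (τ^[k] ω) = g ω + ∑ k ∈ Finset.range n, g (τ^[k] (τ ω)) := by
  rw [Finset.sum_range_succ' (fun k => g (τ^[k] ω)) n]
  simp [Function.iterate_succ_apply, add_comm]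

lemma stmt10S_le_M (g : Ω → ℝ) (τ : Ω → Ω) :
    ∀ n ω, (∑ k ∈ Finset.range n, g (τ^[k] ω)) ≤ stmt10M g τ n ω
  | 0, ω => by simp [stmt10M]
  | (n+1), ω => by
      have h := stmt10S_le_M g τ n (τ ω)
      rw [stmt10S_succ]
      refine le_trans ?_ (le_max_right 0 _)
      linarith

lemma stmt10_hopf (m : Measure Ω) [IsProbabilityMeasure m] (τ : Ω → Ω)
    (hτ : MeasurePreserving τ m m)
    (hergτ : ∀ s : Set Ω, MeasurableSet s → τ ⁻¹' s = s → m s = 0 ∨ m s = 1)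
    (g : Ω → ℝ) (hg : Measurable g) (hgi : Integrable g m)
    (hneg : ∫ ω, g ω ∂m < 0) :
    ∀ᵐ ω ∂m, ∃ K : ℝ, ∀ n, ∑ k ∈ Finset.range n, g (τ^[k] ω) ≤ K := by
  set M := stmt10M g τ with hM
  set A : ℕ → Set Ω := fun n => {ω | 0 < g ω + M n (τ ω)} with hA
  have hMτmeas : ∀ n, Measurable fun ω => M n (τ ω) :=
    fun n => (stmt10M_meas hg hτ.measurable n).comp hτ.measurable
  have hMτint : ∀ n, Integrable (fun ω => M n (τ ω)) m := fun n =>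
    (hτ.integrable_comp (stmt10M_meas hg hτ.measurable n).aestronglyMeasurable).mpr
      (stmt10M_int hg hgi hτ n)
  have hAmeas : ∀ n, MeasurableSet (A n) :=
    fun n => measurableSet_lt measurable_const (hg.add (hMτmeas n))
  have hAmono : Monotone A := by
    apply monotone_nat_of_le_succ
    intro n ω hω
    have := stmt10M_mono g τ n (τ ω)
    simp only [hA, Set.mem_setOf_eq] at hω ⊢
    linarith
  -- pointwise key inequality
  have hkey : ∀ n ω, M n ω - M n (τ ω) ≤ (A n).indicator g ω := by
    intro n ω
    have hmono := stmt10M_mono g τ n ω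
    have hstep : M (n+1) ω = max 0 (g ω + M n (τ ω)) := rfl
    by_cases hω : ω ∈ A n
    · rw [Set.indicator_of_mem hω]
      have h1 : M (n+1) ω = g ω + M n (τ ω) := by
        rw [hstep]; exact max_eq_right (le_of_lt hω)
      linarith
    · rw [Set.indicator_of_notMem hω]
      have hle : g ω + M n (τ ω) ≤ 0 := not_lt.mp hω
      have h1 : M (n+1) ω = 0 := by rw [hstep]; exact max_eq_left hle
      have h3 := stmt10M_nonneg g τ n ω
      have h4 := stmt10M_nonneg g τ n (τ ω)
      linarith
  -- integral of the difference is zero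
  have hinteq : ∀ n, ∫ ω, M n (τ ω) ∂m = ∫ ω, M n ω ∂m := by
    intro n
    conv_rhs => rw [← hτ.map_eq]
    rw [integral_map hτ.aemeasurable
      (((stmt10M_meas hg hτ.measurable n).aestronglyMeasurable).mono_measure
        (le_of_eq hτ.map_eq) |>.mono_measure (le_refl _))]
  have hindint : ∀ n, Integrable ((A n).indicator g) m :=
    fun n => hgi.indicator (hAmeas n)
  have hpos : ∀ n, (0:ℝ) ≤ ∫ ω in A n, g ω ∂m := by
    intro n
    have h0 : ∫ ω, (M n ω - M n (τ ω)) ∂m = 0 := by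
      rw [integral_sub (stmt10M_int hg hgi hτ n) (hMτint n), hinteq n, sub_self]
    have hle : ∫ ω, (M n ω - M n (τ ω)) ∂m ≤ ∫ ω, (A n).indicator g ω ∂m :=
      integral_mono ((stmt10M_int hg hgi hτ n).sub (hMτint n)) (hindint n)
        (fun ω => hkey n ω)
    rw [h0] at hle
    rwa [integral_indicator (hAmeas n)] at hle
  set U := ⋃ n, A n with hU
  have hUmeas : MeasurableSet U := MeasurableSet.iUnion hAmeas
  have hUpos : (0:ℝ) ≤ ∫ ω in U, g ω ∂m := by
    have ht := tendsto_setIntegral_of_monotone hAmeas hAmono (hgi.integrableOn)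
    exact ge_of_tendsto ht (Eventually.of_forall hpos)
  -- the unbounded-sums set
  set B : Set Ω := ⋂ (K : ℕ), ⋃ (n : ℕ), {ω | (K:ℝ) < ∑ k ∈ Finset.range n, g (τ^[k] ω)}
    with hB
  have hSmeas : ∀ n, Measurable fun ω => ∑ k ∈ Finset.range n, g (τ^[k] ω) := by
    intro n
    exact Finset.measurable_sum _ fun k _ => hg.comp (hτ.measurable.iterate k)
  have hBmeas : MeasurableSet B :=
    MeasurableSet.iInter fun K => MeasurableSet.iUnion fun n =>
      measurableSet_lt measurable_const (hSmeas n)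
  have hBmem : ∀ ω, ω ∈ B ↔ ∀ K : ℕ, ∃ n, (K:ℝ) < ∑ k ∈ Finset.range n, g (τ^[k] ω) := by
    intro ω; simp [hB]
  have hBinv : τ ⁻¹' B = B := by
    ext ω
    simp only [Set.mem_preimage, hBmem]
    constructor
    · intro h K
      obtain ⟨K', hK'⟩ := exists_nat_ge ((K:ℝ) - g ω)
      obtain ⟨n, hn⟩ := h K'
      refine ⟨n + 1, ?_⟩
      rw [stmt10S_succ]
      have : (K':ℝ) ≥ (K:ℝ) - g ω := hK'
      linarith
    · intro h K
      obtain ⟨K', hK'⟩ := exists_nat_ge ((K:ℝ) + g ω)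
      obtain ⟨n, hn⟩ := h K'
      rcases n with _ | n'
      · rw [Finset.range_zero, Finset.sum_empty] at hn
        exact absurd hn (not_lt.mpr (Nat.cast_nonneg K'))
      · refine ⟨n', ?_⟩
        rw [stmt10S_succ] at hn
        linarith
  have hBU : B ⊆ U := by
    intro ω hω
    obtain ⟨n, hn⟩ := (hBmem ω).mp hω 0
    rcases n with _ | n'
    · simp at hn
    · have h2 := stmt10S_le_M g τ n' (τ ω)
      rw [stmt10S_succ] at hn
      simp only [Nat.cast_zero] at hn
      exact Set.mem_iUnion.mpr ⟨n', by simp only [hA, Set.mem_setOf_eq]; linarith⟩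
  rcases hergτ B hBmeas hBinv with h0 | h1
  · -- m B = 0 : good case
    have : ∀ᵐ ω ∂m, ω ∉ B := (measure_eq_zero_iff_ae_notMem).mp h0
    filter_upwards [this] with ω hω
    rw [hBmem] at hω
    push_neg at hω
    obtain ⟨K, hK⟩ := hω
    exact ⟨(K:ℝ), fun n => hK n⟩
  · -- m B = 1 : contradiction
    exfalso
    have hmU : m U = 1 := le_antisymm prob_le_one (h1 ▸ measure_mono hBU)
    have hUc : m Uᶜ = 0 := by
      rw [measure_compl hUmeas (measure_ne_top m U), hmU]
      simp
    have hsplit : ∫ ω in U, g ω ∂m + ∫ ω in Uᶜ, g ω ∂m = ∫ ω, g ω ∂m :=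
      integral_add_compl hUmeas hgi
    have hUc0 : ∫ ω in Uᶜ, g ω ∂m = 0 := by
      rw [Measure.restrict_eq_zero.mpr hUc]
      exact integral_zero_measure _
    rw [hUc0, add_zero] at hsplit
    rw [hsplit] at hUpos
    linarith

lemma stmt10_bc (m : Measure Ω) [IsProbabilityMeasure m] (τ : Ω → Ω)
    (hτ : MeasurePreserving τ m m)
    (h : Ω → ℝ) (hmeas : Measurable h) (hnn : ∀ ω, 0 ≤ h ω) (hint : Integrable h m)
    (ε : ℝ) (hε : 0 < ε) :
    ∀ᵐ ω ∂m, ∀ᶠ j in atTop, h (τ^[j+1] ω) ≤ ε * (j+1) := by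
  set s : ℕ → Set Ω := fun j => τ^[j+1] ⁻¹' {x | ε * ((j:ℝ)+1) < h x} with hs
  have hmeasS : ∀ j : ℕ, MeasurableSet {x | ε * ((j:ℝ)+1) < h x} :=
    fun j => measurableSet_lt measurable_const hmeas
  have hμs : ∀ j, m (s j) = m {x | ε * ((j:ℝ)+1) < h x} :=
    fun j => (hτ.iterate (j+1)).measure_preimage (hmeasS j).nullMeasurableSet
  have key : (∑' j, m (s j)) ≠ ∞ := by
    have step1 : (∑' j, m (s j)) = ∑' j : ℕ, ∫⁻ x, Set.indicator {x | ε * ((j:ℝ)+1) < h x}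
        (fun _ => (1:ENNReal)) x ∂m := by
      simp_rw [hμs]
      congr 1; funext j
      exact (lintegral_indicator_one (hmeasS j)).symm
    have step2 : (∑' j : ℕ, ∫⁻ x, Set.indicator {x | ε * ((j:ℝ)+1) < h x}
        (fun _ => (1:ENNReal)) x ∂m)
        = ∫⁻ x, ∑' j : ℕ, Set.indicator {x | ε * ((j:ℝ)+1) < h x} (fun _ => (1:ENNReal)) x ∂m :=
      (lintegral_tsum fun j => ((measurable_one.indicator (hmeasS j)).aemeasurable)).symm
    have step3 : ∀ x, (∑' j : ℕ, Set.indicator {x | ε * ((j:ℝ)+1) < h x}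
        (fun _ => (1:ENNReal)) x) ≤ ENNReal.ofReal (h x / ε) := by
      intro x
      set N := Nat.floor (h x / ε) with hN
      have hzero : ∀ j : ℕ, j ∉ Finset.range N →
          Set.indicator {x | ε * ((j:ℝ)+1) < h x} (fun _ => (1:ENNReal)) x = 0 := by
        intro j hj
        simp only [Finset.mem_range, not_lt] at hj
        apply Set.indicator_of_notMem
        simp only [Set.mem_setOf_eq, not_lt]
        have h1 : h x / ε < (N:ℝ) + 1 := Nat.lt_floor_add_one _
        have h2 : (N:ℝ) ≤ (j:ℝ) := Nat.cast_le.mpr hj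
        have h3 : h x / ε < (j:ℝ) + 1 := by linarith
        rw [div_lt_iff₀ hε] at h3
        linarith [h3]
      rw [tsum_eq_sum hzero]
      calc ∑ j ∈ Finset.range N, Set.indicator {x | ε * ((j:ℝ)+1) < h x}
            (fun _ => (1:ENNReal)) x
          ≤ ∑ _j ∈ Finset.range N, (1:ENNReal) :=
            Finset.sum_le_sum fun j _ => Set.indicator_apply_le' (fun _ => le_rfl) (fun _ => zero_le_one)
        _ = (N : ENNReal) := by simp
        _ ≤ ENNReal.ofReal (h x / ε) := by
            rw [← ENNReal.ofReal_natCast N]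
            exact ENNReal.ofReal_le_ofReal (Nat.floor_le (div_nonneg (hnn x) hε.le))
    have step4 : ∫⁻ x, ENNReal.ofReal (h x / ε) ∂m < ∞ := by
      have hint2 : Integrable (fun x => h x / ε) m := hint.div_const ε
      have := (hasFiniteIntegral_iff_ofReal
        (Eventually.of_forall fun x => div_nonneg (hnn x) hε.le)).mp hint2.hasFiniteIntegral
      exact this
    rw [step1, step2]
    exact ne_of_lt (lt_of_le_of_lt (lintegral_mono step3) step4)
  filter_upwards [ae_eventually_notMem key] with ω hω
  filter_upwards [hω] with j hj
  simp only [hs, Set.mem_preimage, Set.mem_setOf_eq, not_lt] at hj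
  convert hj using 2

noncomputable def stmt10F (γ : ℝ) (c d : Ω → ℝ) (σinv : Ω → Ω) (ω : Ω) (j : ℕ) : ℝ :=
  γ ^ (-(j:ℤ)-1) * d (σinv^[j+1] ω) * ∏ k ∈ Finset.range j, c (σinv^[k+1] ω)

lemma stmt10F_pos (γ : ℝ) (c d : Ω → ℝ) (σinv : Ω → Ω) (hγ0 : 0 < γ)
    (hcpos : ∀ ω, 0 < c ω) (hdpos : ∀ ω, 0 < d ω) (ω : Ω) (j : ℕ) :
    0 < stmt10F γ c d σinv ω j :=
  mul_pos (mul_pos (zpow_pos hγ0 _) (hdpos _)) (Finset.prod_pos fun k _ => hcpos _)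

lemma stmt10F_eq_exp (γ : ℝ) (c d : Ω → ℝ) (σinv : Ω → Ω) (hγ0 : 0 < γ)
    (hcpos : ∀ ω, 0 < c ω) (hdpos : ∀ ω, 0 < d ω) (ω : Ω) (j : ℕ) :
    stmt10F γ c d σinv ω j = Real.exp (-((j:ℝ)+1) * Real.log γ
      + Real.log (d (σinv^[j+1] ω)) + ∑ k ∈ Finset.range j, Real.log (c (σinv^[k+1] ω))) := by
  rw [Real.exp_add, Real.exp_add, Real.exp_sum]
  unfold stmt10F
  congr 1
  congr 1
  · rw [show (-(j:ℤ)-1) = -((j+1 : ℕ) : ℤ) by push_cast; ring, zpow_neg, zpow_natCast]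
    rw [show (-((j:ℝ)+1) * Real.log γ) = -(((j+1:ℕ):ℝ) * Real.log γ) by push_cast; ring]
    rw [Real.exp_neg, Real.exp_nat_mul, Real.exp_log hγ0]
  · exact (Real.exp_log (hdpos _)).symm
  · exact Finset.prod_congr rfl fun k _ => (Real.exp_log (hcpos _)).symm

lemma stmt10_summable (σinv : Ω → Ω) (c d : Ω → ℝ)
    (hcpos : ∀ ω, 0 < c ω) (hdpos : ∀ ω, 0 < d ω)
    (γ γ' K : ℝ) (hγ0 : 0 < γ) (hγ'γ : Real.log γ' < Real.log γ)
    (ω : Ω) (N : ℕ)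
    (hc : ∀ n, ∑ k ∈ Finset.range n, (Real.log (c (σinv^[k] ω)) - Real.log γ') ≤ K)
    (hd : ∀ j, N ≤ j →
      Real.log (d (σinv^[j+1] ω)) ≤ (Real.log γ - Real.log γ')/2 * ((j:ℝ)+1)) :
    Summable (stmt10F γ c d σinv ω) := by
  set ε := (Real.log γ - Real.log γ')/2 with hε
  have hεpos : 0 < ε := by rw [hε]; linarith
  have hsum_c : ∀ j : ℕ, ∑ k ∈ Finset.range j, Real.log (c (σinv^[k+1] ω))
      ≤ K - (Real.log (c ω) - Real.log γ') + (j:ℝ) * Real.log γ' := by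
    intro j
    have e1 : ∑ k ∈ Finset.range (j+1), (Real.log (c (σinv^[k] ω)) - Real.log γ')
        = (∑ k ∈ Finset.range j, (Real.log (c (σinv^[k+1] ω)) - Real.log γ'))
          + (Real.log (c ω) - Real.log γ') := by
      rw [Finset.sum_range_succ' (fun k => Real.log (c (σinv^[k] ω)) - Real.log γ') j]
      rw [Function.iterate_zero_apply]
    have e2 : ∑ k ∈ Finset.range j, (Real.log (c (σinv^[k+1] ω)) - Real.log γ')
        = (∑ k ∈ Finset.range j, Real.log (c (σinv^[k+1] ω))) - (j:ℝ) * Real.log γ' := by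
      rw [Finset.sum_sub_distrib, Finset.sum_const, Finset.card_range, nsmul_eq_mul]
    have h3 := hc (j+1)
    rw [e1, e2] at h3
    linarith
  set C0 := K - (Real.log (c ω) - Real.log γ') - Real.log γ + ε with hC0
  have hbound : ∀ j, N ≤ j → stmt10F γ c d σinv ω j
      ≤ Real.exp C0 * Real.exp (-ε) ^ j := by
    intro j hj
    rw [stmt10F_eq_exp γ c d σinv hγ0 hcpos hdpos ω j, ← Real.exp_nat_mul, ← Real.exp_add]
    apply Real.exp_le_exp.mpr
    have h1 := hd j hj
    have h2 := hsum_c j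
    have expand : C0 + (j:ℝ) * -ε
        = (-(((j:ℝ))+1) * Real.log γ) + (ε*((j:ℝ)+1))
          + (K - (Real.log (c ω) - Real.log γ') + (j:ℝ) * Real.log γ') := by
      rw [hC0, hε]; ring
    linarith
  have hgeom : Summable (fun n : ℕ =>
      (Real.exp C0 * Real.exp (-ε) ^ N) * Real.exp (-ε) ^ n) :=
    (summable_geometric_of_lt_one (Real.exp_nonneg _)
      (Real.exp_lt_one_iff.mpr (by linarith))).mul_left _
  rw [← summable_nat_add_iff N]
  apply Summable.of_nonneg_of_le
    (fun n => (stmt10F_pos γ c d σinv hγ0 hcpos hdpos ω (n+N)).le) (fun n => ?_) hgeom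
  calc stmt10F γ c d σinv ω (n+N) ≤ Real.exp C0 * Real.exp (-ε) ^ (n+N) :=
        hbound (n+N) (Nat.le_add_left N n)
    _ = (Real.exp C0 * Real.exp (-ε) ^ N) * Real.exp (-ε) ^ n := by rw [pow_add]; ring

lemma stmt10_identity (σ σinv : Ω → Ω) (hlinv : Function.LeftInverse σinv σ)
    (c d : Ω → ℝ) (γ : ℝ) (hγ0 : 0 < γ) (ω : Ω)
    (hsum : Summable (stmt10F γ c d σinv ω)) :
    Summable (stmt10F γ c d σinv (σ ω)) ∧
      γ * ∑' j, stmt10F γ c d σinv (σ ω) j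
        = c ω * ∑' j, stmt10F γ c d σinv ω j + d ω := by
  have hγne : γ ≠ 0 := ne_of_gt hγ0
  have hiter : ∀ n : ℕ, σinv^[n+1] (σ ω) = σinv^[n] ω := by
    intro n; rw [Function.iterate_succ_apply, hlinv ω]
  have hG0 : stmt10F γ c d σinv (σ ω) 0 = γ⁻¹ * d ω := by
    unfold stmt10F
    rw [hiter 0]
    simp
  have hGsucc : ∀ j : ℕ, stmt10F γ c d σinv (σ ω) (j+1)
      = (c ω / γ) * stmt10F γ c d σinv ω j := by
    intro j
    unfold stmt10F
    rw [hiter (j+1)]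
    have hprod : ∏ k ∈ Finset.range (j+1), c (σinv^[k+1] (σ ω))
        = c ω * ∏ k ∈ Finset.range j, c (σinv^[k+1] ω) := by
      calc ∏ k ∈ Finset.range (j+1), c (σinv^[k+1] (σ ω))
          = ∏ k ∈ Finset.range (j+1), c (σinv^[k] ω) :=
            Finset.prod_congr rfl fun k _ => by rw [hiter k]
        _ = (∏ k ∈ Finset.range j, c (σinv^[k+1] ω)) * c (σinv^[0] ω) :=
            Finset.prod_range_succ' _ j
        _ = c ω * ∏ k ∈ Finset.range j, c (σinv^[k+1] ω) := by
            rw [Function.iterate_zero_apply]; ring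
    have hz : γ ^ (-((j+1:ℕ):ℤ)-1) = γ⁻¹ * γ ^ (-(j:ℤ)-1) := by
      rw [← zpow_neg_one γ, ← zpow_add₀ hγne]
      congr 1; push_cast; ring
    rw [hprod, hz]
    field_simp
  have hsum' : Summable (fun j => stmt10F γ c d σinv (σ ω) (j+1)) :=
    (hsum.mul_left (c ω / γ)).congr fun j => (hGsucc j).symm
  have hsumG : Summable (stmt10F γ c d σinv (σ ω)) :=
    (summable_nat_add_iff 1).mp hsum'
  refine ⟨hsumG, ?_⟩
  rw [Summable.tsum_eq_zero_add hsumG, hG0]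
  have htail : ∑' j, stmt10F γ c d σinv (σ ω) (j+1)
      = (c ω / γ) * ∑' j, stmt10F γ c d σinv ω j := by
    rw [← tsum_mul_left]
    exact tsum_congr hGsucc
  rw [htail]
  field_simp
  ring
end aux

/-- Let `σ` be an invertible ergodic measure-preserving transformation of a
probability space `(Ω, m)` and `c, d : Ω → (0,∞)` measurable with `log c, log d ∈ L¹(m)`
and `∫ log c dm < log γ̃ < log γ < 0` for constants `γ̃, γ ∈ (0,1)`.  Then
`a(ω) = Σ_{j≥0} γ^{-j-1} d(σ^{-j-1}ω) ∏_{k=1}^j c(σ^{-k}ω)` is m-a.s. finite (the series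
is summable) and satisfies `γ·a(σω) = c(ω)·a(ω) + d(ω)` for m-a.e. `ω`. -/
theorem stmt10 {Ω : Type*} [MeasurableSpace Ω] (m : Measure Ω) [IsProbabilityMeasure m]
    (σ σinv : Ω → Ω)
    (hmp : MeasurePreserving σ m m) (herg : Ergodic σ m)
    (hlinv : Function.LeftInverse σinv σ) (hrinv : Function.RightInverse σinv σ)
    (hinvmeas : Measurable σinv)
    (c d : Ω → ℝ) (hcm : Measurable c) (hdm : Measurable d)
    (hcpos : ∀ ω, 0 < c ω) (hdpos : ∀ ω, 0 < d ω)
    (hlogc : Integrable (fun ω => Real.log (c ω)) m)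
    (hlogd : Integrable (fun ω => Real.log (d ω)) m)
    (γ γ' : ℝ) (hγ'0 : 0 < γ') (hγ0 : 0 < γ) (hγ1 : γ < 1)
    (hintc : ∫ ω, Real.log (c ω) ∂m < Real.log γ')
    (hγ'γ : Real.log γ' < Real.log γ) (hγneg : Real.log γ < 0)
    (A : Ω → ℝ)
    (hA : ∀ ω, A ω = ∑' j : ℕ,
      γ ^ (-(j : ℤ) - 1) * d (σinv^[j + 1] ω) * ∏ k ∈ Finset.range j, c (σinv^[k + 1] ω)) :
    ∀ᵐ ω ∂m,
      Summable (fun j : ℕ =>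
        γ ^ (-(j : ℤ) - 1) * d (σinv^[j + 1] ω) * ∏ k ∈ Finset.range j, c (σinv^[k + 1] ω)) ∧
      γ * A (σ ω) = c ω * A ω + d ω := by
  have hmapτ : Measure.map σinv m = m := by
    conv_lhs => rw [← hmp.map_eq]
    rw [Measure.map_map hinvmeas hmp.measurable]
    have hid : σinv ∘ σ = id := funext hlinv
    rw [hid, Measure.map_id]
  have hmpτ : MeasurePreserving σinv m m := ⟨hinvmeas, hmapτ⟩
  have hergτ : ∀ s : Set Ω, MeasurableSet s → σinv ⁻¹' s = s → m s = 0 ∨ m s = 1 := by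
    intro s hsm hsinv
    have hσ : σ ⁻¹' s = s := by
      ext x
      have h1 := Set.ext_iff.mp hsinv (σ x)
      simp only [Set.mem_preimage] at h1 ⊢
      rw [hlinv x] at h1
      exact h1.symm
    rcases herg.ae_empty_or_univ hsm hσ with h | h
    · left; exact ae_eq_empty.mp h
    · right
      have h2 := measure_congr h
      simpa using h2
  set g : Ω → ℝ := fun ω => Real.log (c ω) - Real.log γ' with hgdef
  have hgmeas : Measurable g := (Real.measurable_log.comp hcm).sub measurable_const
  have hgi : Integrable g m := hlogc.sub (integrable_const _)
  have hgneg : ∫ ω, g ω ∂m < 0 := by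
    have : ∫ ω, g ω ∂m = (∫ ω, Real.log (c ω) ∂m) - Real.log γ' := by
      rw [hgdef, integral_sub hlogc (integrable_const _), integral_const]
      simp
    rw [this]; linarith
  set hfun : Ω → ℝ := fun ω => max (Real.log (d ω)) 0 with hhdef
  have hhmeas : Measurable hfun := (Real.measurable_log.comp hdm).max measurable_const
  have hhnn : ∀ ω, 0 ≤ hfun ω := fun ω => le_max_right _ _
  have hhint : Integrable hfun m := hlogd.pos_part
  have hεpos : (0:ℝ) < (Real.log γ - Real.log γ')/2 := by linarith
  filter_upwards [stmt10_hopf m σinv hmpτ hergτ g hgmeas hgi hgneg,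
    stmt10_bc m σinv hmpτ hfun hhmeas hhnn hhint _ hεpos] with ω hK hev
  obtain ⟨K, hKb⟩ := hK
  obtain ⟨N, hN⟩ := eventually_atTop.mp hev
  have hsum : Summable (stmt10F γ c d σinv ω) := by
    apply stmt10_summable σinv c d hcpos hdpos γ γ' K hγ0 hγ'γ ω N
    · intro n; exact hKb n
    · intro j hj
      calc Real.log (d (σinv^[j+1] ω)) ≤ hfun (σinv^[j+1] ω) := le_max_left _ _
        _ ≤ (Real.log γ - Real.log γ')/2 * ((j:ℝ)+1) := by
            have h5 := hN j hj
            push_cast at h5 ⊢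
            linarith
  have hid := stmt10_identity σ σinv hlinv c d γ hγ0 ω hsum
  refine ⟨hsum, ?_⟩
  rw [hA ω, hA (σ ω)]
  exact hid.2
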